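/- Let B be a nonempty compact topological space and k, p ≥ 1. Let Φ : B → ℝ^p → ℝ^k satisfy Φ(β)(0) = 0 for all β, let ∇ : B → (real k×p matrices) be continuous, and assume uniform differentiability at 0: for every ε' > 0 there exists η > 0 such that ‖Φ(β)(γ) − ∇(β)·γ‖ ≤ ε'·‖γ‖ whenever ‖γ‖ ≤ η and β ∈ B. Let W : B → (real k×k matrices) be continuous with W(β) symmetric positive definite for every β, and assume J(β) = ∇(β)ᵀ W(β) ∇(β) is positive definite for every β ∈ B. Then there exist constants C1 > 0, C2 > 0, and ε > 0 such that for all β ∈ B and all γ ∈ ℝ^p with ‖γ‖ < ε: C1·‖γ‖² ≤ Φ(β)(γ)ᵀ W(β) Φ(β)(γ) ≤ C2·‖γ‖². -/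

import Mathlib

open Matrix

section Aux
variable {k p : ℕ}

private lemma dot_abs_le' (x : EuclideanSpace ℝ (Fin k)) (z : Fin k → ℝ) :
    |x ⬝ᵥ z| ≤ ‖x‖ * ‖(WithLp.equiv 2 (Fin k → ℝ)).symm z‖ := by
  have h : x ⬝ᵥ z = (inner ℝ x ((WithLp.equiv 2 (Fin k → ℝ)).symm z) : ℝ) := by
    rw [EuclideanSpace.inner_eq_star_dotProduct]
    simp only [star_trivial]
    exact dotProduct_comm _ _
  rw [h]
  exact abs_real_inner_le_norm _ _

private lemma quad_smul' (M : Matrix (Fin p) (Fin p) ℝ) (c : ℝ) (v : EuclideanSpace ℝ (Fin p)) :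
    (c • v) ⬝ᵥ M.mulVec ((c • v : EuclideanSpace ℝ (Fin p))) = c ^ 2 * (v ⬝ᵥ M.mulVec v) := by
  simp only [dotProduct, mulVec, PiLp.smul_apply, WithLp.ofLp_smul, Pi.smul_apply, smul_eq_mul, Finset.mul_sum]
  refine Finset.sum_congr rfl fun i _ => ?_
  exact Finset.sum_congr rfl fun j _ => by ring

private lemma mulVec_esmul' (M : Matrix (Fin k) (Fin p) ℝ) (c : ℝ) (v : EuclideanSpace ℝ (Fin p)) :
    M.mulVec ((c • v : EuclideanSpace ℝ (Fin p))) = c • M.mulVec v := by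
  funext i
  simp only [mulVec, dotProduct, PiLp.smul_apply, smul_eq_mul, Pi.smul_apply, Finset.mul_sum]
  exact Finset.sum_congr rfl fun j _ => by ring

private lemma mulVec_ezero' (M : Matrix (Fin k) (Fin p) ℝ) :
    M.mulVec (0 : EuclideanSpace ℝ (Fin p)) = 0 := by
  funext i
  simp [mulVec, dotProduct, PiLp.zero_apply]

private lemma quad_expand' (W : Matrix (Fin k) (Fin k) ℝ) (y e : EuclideanSpace ℝ (Fin k)) :
    (y + e) ⬝ᵥ W.mulVec ((y + e : EuclideanSpace ℝ (Fin k))) =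
      y ⬝ᵥ W.mulVec y + (y ⬝ᵥ W.mulVec e + (e ⬝ᵥ W.mulVec y + e ⬝ᵥ W.mulVec e)) := by
  simp only [dotProduct, mulVec, PiLp.add_apply, WithLp.ofLp_add, Pi.add_apply, Finset.mul_sum, mul_add, add_mul,
    Finset.sum_add_distrib]
  ring

private lemma quad_transfer' (A : Matrix (Fin k) (Fin p) ℝ) (W : Matrix (Fin k) (Fin k) ℝ)
    (γ : Fin p → ℝ) :
    A.mulVec γ ⬝ᵥ W.mulVec (A.mulVec γ) = γ ⬝ᵥ (Aᵀ * W * A).mulVec γ := by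
  rw [← mulVec_mulVec, ← mulVec_mulVec, dotProduct_mulVec γ, vecMul_transpose,
    dotProduct_mulVec]

/-- Uniform operator-type bound for a continuous family of matrices over a compact base. -/
private lemma uniform_mulVec_bound {B : Type*} [TopologicalSpace B] [CompactSpace B] [Nonempty B]
    (A : B → Matrix (Fin k) (Fin p) ℝ) (hA : Continuous A)
    (v1 : EuclideanSpace ℝ (Fin p)) (hv1 : ‖v1‖ = 1) :
    ∃ M : ℝ, 1 ≤ M ∧ ∀ β (γ : EuclideanSpace ℝ (Fin p)),
      ‖(WithLp.equiv 2 (Fin k → ℝ)).symm ((A β).mulVec γ)‖ ≤ M * ‖γ‖ := by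
  set S : Set (B × EuclideanSpace ℝ (Fin p)) :=
    (Set.univ : Set B) ×ˢ Metric.sphere (0 : EuclideanSpace ℝ (Fin p)) 1 with hS
  have hScomp : IsCompact S := isCompact_univ.prod (isCompact_sphere 0 1)
  have hSne : S.Nonempty := ⟨(Classical.arbitrary B, v1), by
    simp [hS, Set.mem_prod, mem_sphere_zero_iff_norm, hv1]⟩
  set f : B × EuclideanSpace ℝ (Fin p) → ℝ := fun q =>
    ‖(WithLp.equiv 2 (Fin k → ℝ)).symm ((A q.1).mulVec (WithLp.equiv 2 (Fin p → ℝ) q.2))‖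
    with hf
  have hfc : Continuous f := by
    apply Continuous.norm
    apply (PiLp.continuous_toLp _ _).comp
    exact ((hA.comp continuous_fst).matrix_mulVec
      ((PiLp.continuous_ofLp _ _).comp continuous_snd))
  obtain ⟨⟨β₁, w₁⟩, hmem, hmax⟩ := hScomp.exists_isMaxOn hSne hfc.continuousOn
  refine ⟨max (f (β₁, w₁)) 1, le_max_right _ _, fun β γ => ?_⟩
  rcases eq_or_ne γ 0 with rfl | hγ
  · simp [mulVec_ezero', norm_zero]
  · have hc : ‖γ‖ ≠ 0 := norm_ne_zero_iff.mpr hγ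
    set v : EuclideanSpace ℝ (Fin p) := ‖γ‖⁻¹ • γ with hv
    have hvn : ‖v‖ = 1 := norm_smul_inv_norm hγ
    have hγv : γ = ‖γ‖ • v := by
      rw [hv, smul_smul, mul_inv_cancel₀ hc, one_smul]
    have hmemv : (β, v) ∈ S := by
      simp [hS, Set.mem_prod, mem_sphere_zero_iff_norm, hvn]
    have hle : f (β, v) ≤ f (β₁, w₁) := hmax hmemv
    have hval : f (β, v) = ‖(WithLp.equiv 2 (Fin k → ℝ)).symm ((A β).mulVec v)‖ := rfl
    calc ‖(WithLp.equiv 2 (Fin k → ℝ)).symm ((A β).mulVec γ)‖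
        = ‖γ‖ * ‖(WithLp.equiv 2 (Fin k → ℝ)).symm ((A β).mulVec v)‖ := by
          rw [hγv, mulVec_esmul', WithLp.equiv_symm_apply, WithLp.toLp_smul, norm_smul]
          simp [norm_smul, hvn]
      _ ≤ ‖γ‖ * max (f (β₁, w₁)) 1 := by
          apply mul_le_mul_of_nonneg_left _ (norm_nonneg γ)
          exact le_trans (hval ▸ hle) (le_max_left _ _)
      _ = max (f (β₁, w₁)) 1 * ‖γ‖ := mul_comm _ _

end Aux

set_option maxHeartbeats 1000000 in
/-- Uniform quadratic bounds for the population GMM objective near the identified set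
(proof of Theorem 5 of Andrews–Mikusheva): uniform differentiability of `Φ(β,·)` at
`γ = 0` with full-rank Jacobians over the compact set `B` gives constants `C1, C2, ε > 0`
with `C1‖γ‖² ≤ Φ(β,γ)ᵀW(β)Φ(β,γ) ≤ C2‖γ‖²` for all `β` and `‖γ‖ < ε`. -/
theorem stmt_12 {B : Type*} [TopologicalSpace B] [CompactSpace B] [Nonempty B]
    (k p : ℕ) (hk : 1 ≤ k) (hp : 1 ≤ p)
    (Φ : B → EuclideanSpace ℝ (Fin p) → EuclideanSpace ℝ (Fin k))
    (hΦ0 : ∀ β, Φ β 0 = 0)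
    (Dl : B → Matrix (Fin k) (Fin p) ℝ) (hDlc : Continuous Dl)
    (hdiff : ∀ ε' > (0 : ℝ), ∃ η > (0 : ℝ), ∀ β (γ : EuclideanSpace ℝ (Fin p)),
      ‖γ‖ ≤ η →
        ‖Φ β γ - (WithLp.equiv 2 (Fin k → ℝ)).symm ((Dl β).mulVec γ)‖ ≤ ε' * ‖γ‖)
    (W : B → Matrix (Fin k) (Fin k) ℝ) (hWc : Continuous W)
    (hWPD : ∀ β, (W β).PosDef)
    (hJPD : ∀ β, ((Dl β)ᵀ * W β * Dl β).PosDef) :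
    ∃ C1 > (0 : ℝ), ∃ C2 > (0 : ℝ), ∃ ε > (0 : ℝ),
      ∀ β (γ : EuclideanSpace ℝ (Fin p)), ‖γ‖ < ε →
        C1 * ‖γ‖ ^ 2 ≤ Φ β γ ⬝ᵥ (W β).mulVec (Φ β γ) ∧
          Φ β γ ⬝ᵥ (W β).mulVec (Φ β γ) ≤ C2 * ‖γ‖ ^ 2 := by
  classical
  -- unit vectors
  have hv1p : ‖(EuclideanSpace.single (⟨0, hp⟩ : Fin p) (1 : ℝ))‖ = 1 := by
    simp [EuclideanSpace.norm_single]
  have hv1k : ‖(EuclideanSpace.single (⟨0, hk⟩ : Fin k) (1 : ℝ))‖ = 1 := by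
    simp [EuclideanSpace.norm_single]
  -- Step A : uniform coercivity of J
  set S : Set (B × EuclideanSpace ℝ (Fin p)) :=
    (Set.univ : Set B) ×ˢ Metric.sphere (0 : EuclideanSpace ℝ (Fin p)) 1 with hSdef
  have hScomp : IsCompact S := isCompact_univ.prod (isCompact_sphere 0 1)
  have hSne : S.Nonempty := ⟨(Classical.arbitrary B, EuclideanSpace.single ⟨0, hp⟩ 1), by
    simp [hSdef, Set.mem_prod, mem_sphere_zero_iff_norm, hv1p]⟩
  set g : B × EuclideanSpace ℝ (Fin p) → ℝ := fun q =>
    (WithLp.equiv 2 (Fin p → ℝ) q.2) ⬝ᵥ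
      ((Dl q.1)ᵀ * W q.1 * Dl q.1).mulVec (WithLp.equiv 2 (Fin p → ℝ) q.2) with hgdef
  have hgc : Continuous g := by
    have hcoord : Continuous fun q : B × EuclideanSpace ℝ (Fin p) =>
        (WithLp.equiv 2 (Fin p → ℝ)) q.2 := (PiLp.continuous_ofLp _ _).comp continuous_snd
    have hJ : Continuous fun β => (Dl β)ᵀ * W β * Dl β :=
      (hDlc.matrix_transpose.matrix_mul hWc).matrix_mul hDlc
    exact hcoord.dotProduct ((hJ.comp continuous_fst).matrix_mulVec hcoord)
  have hexA : ∃ a : ℝ, 0 < a ∧ ∀ β (γ : EuclideanSpace ℝ (Fin p)),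
      a * ‖γ‖ ^ 2 ≤ γ ⬝ᵥ ((Dl β)ᵀ * W β * Dl β).mulVec γ := by
    obtain ⟨⟨β₀, v₀⟩, hmem₀, hmin⟩ := hScomp.exists_isMinOn hSne hgc.continuousOn
    refine ⟨g (β₀, v₀), ?_, ?_⟩
    · have hv₀n : ‖v₀‖ = 1 := by
        have := hmem₀.2
        simpa [mem_sphere_zero_iff_norm] using this
      have hv₀ne : v₀ ≠ 0 := by
        intro h
        rw [h] at hv₀n
        simp at hv₀n
      have h := (hJPD β₀).dotProduct_mulVec_pos (x := WithLp.ofLp v₀) (by simpa using hv₀ne)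
      simpa [hgdef] using h
    · intro β γ
      rcases eq_or_ne γ 0 with rfl | hγ
      · have h0 : ((Dl β)ᵀ * W β * Dl β).mulVec (0 : EuclideanSpace ℝ (Fin p)) = 0 :=
          mulVec_ezero' _
        rw [h0]
        simp
      · have hc : ‖γ‖ ≠ 0 := norm_ne_zero_iff.mpr hγ
        set v : EuclideanSpace ℝ (Fin p) := ‖γ‖⁻¹ • γ with hv
        have hvn : ‖v‖ = 1 := norm_smul_inv_norm hγ
        have hγv : γ = ‖γ‖ • v := by rw [hv, smul_smul, mul_inv_cancel₀ hc, one_smul]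
        have hmemv : (β, v) ∈ S := by
          simp [hSdef, Set.mem_prod, mem_sphere_zero_iff_norm, hvn]
        have hle : g (β₀, v₀) ≤ v ⬝ᵥ ((Dl β)ᵀ * W β * Dl β).mulVec v := hmin hmemv
        have hq : γ ⬝ᵥ ((Dl β)ᵀ * W β * Dl β).mulVec γ =
            ‖γ‖ ^ 2 * (v ⬝ᵥ ((Dl β)ᵀ * W β * Dl β).mulVec v) := by
          conv_lhs => rw [hγv]
          rw [quad_smul']
        rw [hq]
        have := mul_le_mul_of_nonneg_left hle (sq_nonneg ‖γ‖)
        linarith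
  obtain ⟨a, ha, hlow⟩ := hexA
  -- Step B : uniform bounds on W and Dl
  obtain ⟨bW, hbW1, hbW⟩ := uniform_mulVec_bound W hWc _ hv1k
  obtain ⟨M, hM1, hM⟩ := uniform_mulVec_bound Dl hDlc _ hv1p
  have hbW0 : (0 : ℝ) < bW := lt_of_lt_of_le one_pos hbW1
  have hM0 : (0 : ℝ) < M := lt_of_lt_of_le one_pos hM1
  -- bilinear bound
  have hbil : ∀ β (x z : EuclideanSpace ℝ (Fin k)),
      |x ⬝ᵥ (W β).mulVec z| ≤ bW * ‖x‖ * ‖z‖ := by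
    intro β x z
    calc |x ⬝ᵥ (W β).mulVec z|
        ≤ ‖x‖ * ‖(WithLp.equiv 2 (Fin k → ℝ)).symm ((W β).mulVec z)‖ := dot_abs_le' x _
      _ ≤ ‖x‖ * (bW * ‖z‖) := by
          exact mul_le_mul_of_nonneg_left (hbW β z) (norm_nonneg x)
      _ = bW * ‖x‖ * ‖z‖ := by ring
  -- choose ε'
  set D : ℝ := 2 * (bW * (2 * M + 1)) with hDdef
  have hD0 : 0 < D := by positivity
  set ε' : ℝ := min 1 (a / D) with hε'def
  have hε'0 : 0 < ε' := lt_min one_pos (by positivity)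
  have hε'1 : ε' ≤ 1 := min_le_left _ _
  have hε'D : ε' * D ≤ a := by
    have := min_le_right (1 : ℝ) (a / D)
    calc ε' * D ≤ (a / D) * D := mul_le_mul_of_nonneg_right this hD0.le
      _ = a := div_mul_cancel₀ a hD0.ne'
  obtain ⟨η, hη0, hη⟩ := hdiff ε' hε'0
  clear_value ε' D
  refine ⟨a / 2, by positivity, bW * M ^ 2 + a / 2, by positivity, η, hη0, ?_⟩
  intro β γ hγη
  set y : Fin k → ℝ := (Dl β).mulVec γ with hydef
  set yE : EuclideanSpace ℝ (Fin k) := (WithLp.equiv 2 (Fin k → ℝ)).symm y with hyEdef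
  set e : EuclideanSpace ℝ (Fin k) := Φ β γ - yE with hedef
  have he : ‖e‖ ≤ ε' * ‖γ‖ := hη β γ hγη.le
  have hxe : Φ β γ = yE + e := by rw [hedef]; abel
  have hyEnorm : ‖yE‖ ≤ M * ‖γ‖ := hM β γ
  have hQ : Φ β γ ⬝ᵥ (W β).mulVec (Φ β γ) =
      yE ⬝ᵥ (W β).mulVec yE +
        (yE ⬝ᵥ (W β).mulVec e + (e ⬝ᵥ (W β).mulVec yE + e ⬝ᵥ (W β).mulVec e)) := by
    rw [hxe, quad_expand']
  have hT0 : yE ⬝ᵥ (W β).mulVec yE = γ ⬝ᵥ ((Dl β)ᵀ * W β * Dl β).mulVec γ :=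
    quad_transfer' (Dl β) (W β) γ
  have hT0low : a * ‖γ‖ ^ 2 ≤ yE ⬝ᵥ (W β).mulVec yE := by rw [hT0]; exact hlow β γ
  have hT0up : yE ⬝ᵥ (W β).mulVec yE ≤ bW * ‖yE‖ * ‖yE‖ :=
    le_trans (le_abs_self _) (hbil β yE yE)
  have hT1 : |yE ⬝ᵥ (W β).mulVec e| ≤ bW * ‖yE‖ * ‖e‖ := hbil β yE e
  have hT2 : |e ⬝ᵥ (W β).mulVec yE| ≤ bW * ‖e‖ * ‖yE‖ := hbil β e yE
  have hT3 : |e ⬝ᵥ (W β).mulVec e| ≤ bW * ‖e‖ * ‖e‖ := hbil β e e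
  clear_value y yE e
  set n : ℝ := ‖γ‖ with hndef
  clear_value n
  have hn0 : 0 ≤ n := by rw [hndef]; exact norm_nonneg γ
  have hu0 : 0 ≤ ‖yE‖ := norm_nonneg yE
  have hw0 : 0 ≤ ‖e‖ := norm_nonneg e
  have h1 : ‖yE‖ * ‖e‖ ≤ (M * n) * (ε' * n) :=
    mul_le_mul hyEnorm he hw0 (by positivity)
  have h2 : ‖e‖ * ‖e‖ ≤ (ε' * n) * (ε' * n) :=
    mul_le_mul he he hw0 (by positivity)
  have h2' : (ε' * n) * (ε' * n) ≤ ε' * (n * n) := by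
    nlinarith [mul_nonneg (mul_nonneg hε'0.le (sub_nonneg.2 hε'1)) (mul_nonneg hn0 hn0)]
  have hkey : bW * (ε' * (2 * M + 1)) ≤ a / 2 := by
    rw [hDdef] at hε'D; nlinarith [hε'D]
  have hcorr : bW * ‖yE‖ * ‖e‖ + (bW * ‖e‖ * ‖yE‖ + bW * ‖e‖ * ‖e‖) ≤ (a / 2) * n ^ 2 := by
    nlinarith [h1, h2, h2', hkey, mul_le_mul_of_nonneg_left h1 hbW0.le,
      mul_le_mul_of_nonneg_left h2 hbW0.le, mul_le_mul_of_nonneg_left h2' hbW0.le,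
      mul_le_mul_of_nonneg_right hkey (mul_nonneg hn0 hn0), sq_nonneg n]
  have hsqu : ‖yE‖ * ‖yE‖ ≤ (M * n) * (M * n) :=
    mul_le_mul hyEnorm hyEnorm hu0 (by positivity)
  constructor
  · rw [hQ]
    have e1 := neg_abs_le (yE ⬝ᵥ (W β).mulVec e)
    have e2 := neg_abs_le (e ⬝ᵥ (W β).mulVec yE)
    have e3 := neg_abs_le (e ⬝ᵥ (W β).mulVec e)
    nlinarith [hT0low, hcorr, hT1, hT2, hT3, e1, e2, e3]
  · rw [hQ]
    have e1 := le_abs_self (yE ⬝ᵥ (W β).mulVec e)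
    have e2 := le_abs_self (e ⬝ᵥ (W β).mulVec yE)
    have e3 := le_abs_self (e ⬝ᵥ (W β).mulVec e)
    nlinarith [hT0up, hcorr, hT1, hT2, hT3, e1, e2, e3, hsqu,
      mul_le_mul_of_nonneg_left hsqu hbW0.le]
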